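/- Let k be a field, V a finite-dimensional k-vector space, and θ ∈ End_k(V). Then V has no θ-invariant subspace W with 0 ≠ W ≠ V if and only if End_k(V) has no right ideal I with 0 ≠ I ≠ End_k(V) satisfying (ad θ)(I) ⊆ I, where ad θ : End_k(V) → End_k(V) is the map f ↦ θ∘f − f∘θ. -/

import Mathlib

def rangeIdeal {k V : Type*} [Field k] [AddCommGroup V] [Module k V]
    (W : Submodule k V) : AddSubgroup (Module.End k V) where
  carrier := {f | LinearMap.range f ≤ W}
  add_mem' := by
    intro f g hf hg
    rintro x ⟨y, rfl⟩
    rw [LinearMap.add_apply]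
    exact W.add_mem (hf (LinearMap.mem_range_self f y)) (hg (LinearMap.mem_range_self g y))
  zero_mem' := by
    rintro x ⟨y, rfl⟩
    simp
  neg_mem' := by
    intro f hf
    rintro x ⟨y, rfl⟩
    rw [LinearMap.neg_apply]
    exact W.neg_mem (hf (LinearMap.mem_range_self f y))

def IsRightIdeal {k V : Type*} [Field k] [AddCommGroup V] [Module k V]
    (I : AddSubgroup (Module.End k V)) : Prop :=
  ∀ f ∈ I, ∀ g : Module.End k V, f * g ∈ I

theorem no_proper_invariant_subspace_iff_no_proper_adInvariant_rightIdeal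
    {k V : Type*} [Field k] [AddCommGroup V] [Module k V] [FiniteDimensional k V]
    (θ : Module.End k V) :
    (¬ ∃ W : Submodule k V, (∀ x ∈ W, θ x ∈ W) ∧ W ≠ ⊥ ∧ W ≠ ⊤) ↔
    (¬ ∃ I : AddSubgroup (Module.End k V), IsRightIdeal I ∧
        (∀ f ∈ I, θ * f - f * θ ∈ I) ∧ I ≠ ⊥ ∧ I ≠ ⊤) := by
  constructor
  · intro hV
    rintro ⟨I, hri, had, hIbot, hItop⟩
    apply hV
    set W : Submodule k V := ⨆ f : I, LinearMap.range (f : Module.End k V) with hWdef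
    have hle : ∀ f ∈ I, LinearMap.range f ≤ W := fun f hf =>
      le_iSup (fun g : I => LinearMap.range (g : Module.End k V)) ⟨f, hf⟩
    refine ⟨W, ?_, ?_, ?_⟩
    · -- θ-invariance
      intro x hx
      have hmap : Submodule.map θ W ≤ W := by
        rw [hWdef, Submodule.map_iSup]
        apply iSup_le
        rintro ⟨f, hf⟩
        have hθf : θ * f ∈ I := by
          have h := I.add_mem (had f hf) (hri f hf θ)
          simpa using h
        have : Submodule.map θ (LinearMap.range f) = LinearMap.range (θ * f) :=
          (LinearMap.range_comp f θ).symm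
        rw [this]
        exact hle _ hθf
      exact hmap ⟨x, hx, rfl⟩
    · -- W ≠ ⊥
      intro hWbot
      apply hIbot
      rw [AddSubgroup.eq_bot_iff_forall]
      intro f hf
      have : LinearMap.range f ≤ (⊥ : Submodule k V) := hWbot ▸ hle f hf
      rw [le_bot_iff, LinearMap.range_eq_bot] at this
      exact this
    · -- W ≠ ⊤
      intro hWtop
      apply hItop
      have key : ∀ (φ : Module.Dual k V) (w : V), w ∈ W → φ.smulRight w ∈ I := by
        intro φ
        let S : Submodule k V :=
          { carrier := {w | φ.smulRight w ∈ I}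
            add_mem' := by
              intro a b ha hb
              have : φ.smulRight (a + b) = φ.smulRight a + φ.smulRight b := by
                ext x; simp [smul_add]
              simpa [Set.mem_setOf_eq, this] using I.add_mem ha hb
            zero_mem' := by
              have : φ.smulRight (0 : V) = 0 := by ext x; simp
              simpa [Set.mem_setOf_eq, this] using I.zero_mem
            smul_mem' := by
              intro c w hw
              have : φ.smulRight (c • w) = (φ.smulRight w) * (c • (1 : Module.End k V)) := by
                ext x; simp [smul_smul, mul_comm]
              simpa [Set.mem_setOf_eq, this] using hri _ hw (c • 1) }
        intro w hw
        have hWS : W ≤ S := by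
          rw [hWdef]
          apply iSup_le
          rintro ⟨f, hf⟩
          rintro x ⟨v, rfl⟩
          show φ.smulRight (f v) ∈ I
          have : φ.smulRight (f v) = f * (φ.smulRight v) := by
            ext x; simp
          rw [this]
          exact hri f hf _
        exact hWS hw
      have hone : (1 : Module.End k V) ∈ I := by
        obtain b := Module.finBasis k V
        have hid : (1 : Module.End k V) = ∑ i, (b.coord i).smulRight (b i) := by
          ext x
          simp [LinearMap.smulRight_apply, Module.Basis.coord_apply]
        rw [hid]
        exact I.sum_mem fun i _ => key _ _ (hWtop ▸ Submodule.mem_top)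
      rw [AddSubgroup.eq_top_iff']
      intro g
      simpa using hri 1 hone g
  · intro hI
    rintro ⟨W, hWinv, hWbot, hWtop⟩
    apply hI
    refine ⟨rangeIdeal W, ?_, ?_, ?_, ?_⟩
    · intro f hf g
      rintro x ⟨y, rfl⟩
      exact hf ⟨g y, rfl⟩
    · intro f hf
      rintro x ⟨y, rfl⟩
      show θ (f y) - f (θ y) ∈ W
      exact W.sub_mem (hWinv _ (hf ⟨y, rfl⟩)) (hf ⟨θ y, rfl⟩)
    · -- rangeIdeal W ≠ ⊥
      intro hbot
      obtain ⟨w, hwW, hw0⟩ := Submodule.exists_mem_ne_zero_of_ne_bot hWbot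
      obtain ⟨φ, hφ⟩ : ∃ φ : Module.Dual k V, φ w ≠ 0 := by
        by_contra h
        push_neg at h
        exact hw0 ((Module.forall_dual_apply_eq_zero_iff k w).mp h)
      have hmem : φ.smulRight w ∈ rangeIdeal W := by
        rintro x ⟨y, rfl⟩
        exact W.smul_mem _ hwW
      have : φ.smulRight w = 0 := by
        rw [hbot] at hmem
        exact hmem
      apply hφ
      have := congrArg (fun f : Module.End k V => f w) this
      simp at this
      rcases this with h | h
      · exact h
      · exact absurd h hw0
    · -- rangeIdeal W ≠ ⊤
      intro htop
      apply hWtop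
      have : (1 : Module.End k V) ∈ rangeIdeal W := htop ▸ AddSubgroup.mem_top 1
      have h2 : LinearMap.range (1 : Module.End k V) ≤ W := this
      rw [LinearMap.range_eq_top.mpr (fun x => ⟨x, rfl⟩)] at h2
      exact top_le_iff.mp h2
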